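/- Let S be a finite nonempty set, q a probability distribution on S, and γ > 0 with γ ≠ 1. Then q(s)^γ / Σ_{t∈S} q(t)^γ = q(s) for every s ∈ S if and only if all nonzero values of q are equal, i.e., q is the uniform distribution on its support (including the deterministic case where the support is a single element). -/

import Mathlib

/- STATEMENT 17: for a probability distribution q on a finite nonempty set S and γ > 0,
γ ≠ 1 (with 0^γ = 0), the temperature-scaled distribution q^γ/Σq^γ equals q pointwise iff
all nonzero values of q are equal, i.e. q is uniform on its support (including the
deterministic case). -/
theorem stmt17 {S : Type*} [Fintype S] [Nonempty S]
    (q : S → ℝ) (hq0 : ∀ s, 0 ≤ q s) (hq1 : ∑ s, q s = 1)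
    (γ : ℝ) (hγ : 0 < γ) (hγ1 : γ ≠ 1) :
    (∀ s, q s ^ γ / (∑ t, q t ^ γ) = q s) ↔
    (∀ s t : S, 0 < q s → 0 < q t → q s = q t) := by
  -- some element has positive probability
  obtain ⟨s0, hs0⟩ : ∃ s, 0 < q s := by
    by_contra h
    push_neg at h
    have : ∑ s, q s = 0 := Finset.sum_eq_zero fun s _ => le_antisymm (h s) (hq0 s)
    simp [this] at hq1
  have hZpos : 0 < ∑ t, q t ^ γ := by
    have h1 : 0 < q s0 ^ γ := Real.rpow_pos_of_pos hs0 γ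
    have h2 : q s0 ^ γ ≤ ∑ t, q t ^ γ :=
      Finset.single_le_sum (fun t _ => Real.rpow_nonneg (hq0 t) γ) (Finset.mem_univ s0)
    linarith
  constructor
  · intro h s t hs ht
    have key : ∀ u : S, 0 < q u → Real.log (q u) * (γ - 1) = Real.log (∑ t, q t ^ γ) := by
      intro u hu
      have heq : q u ^ γ = (∑ t, q t ^ γ) * q u := by
        have := h u
        field_simp at this
        linarith [this]
      have h2 : q u ^ (γ - 1) = ∑ t, q t ^ γ := by
        rw [Real.rpow_sub hu, Real.rpow_one, heq]
        field_simp
      calc Real.log (q u) * (γ - 1) = (γ - 1) * Real.log (q u) := mul_comm _ _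
        _ = Real.log (q u ^ (γ - 1)) := (Real.log_rpow hu _).symm
        _ = _ := by rw [h2]
    have hst : Real.log (q s) * (γ - 1) = Real.log (q t) * (γ - 1) := by
      rw [key s hs, key t ht]
    have hγ1' : γ - 1 ≠ 0 := sub_ne_zero.mpr hγ1
    have hlog : Real.log (q s) = Real.log (q t) := by
      exact mul_right_cancel₀ hγ1' hst
    calc q s = Real.exp (Real.log (q s)) := (Real.exp_log hs).symm
      _ = Real.exp (Real.log (q t)) := by rw [hlog]
      _ = q t := Real.exp_log ht
  · intro h s
    set T : Finset S := Finset.univ.filter (fun u => 0 < q u) with hT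
    have hs0T : s0 ∈ T := by simp [hT, hs0]
    have hTne : T.Nonempty := ⟨s0, hs0T⟩
    set c := q s0 with hc
    have hcpos : 0 < c := hs0
    have hqc : ∀ u ∈ T, q u = c := by
      intro u hu
      simp [hT] at hu
      exact h u s0 hu hs0
    have hsum1 : ∑ u, q u = T.card * c := by
      rw [← Finset.sum_filter_add_sum_filter_not Finset.univ (fun u => 0 < q u) q]
      have hzero : ∑ u ∈ Finset.univ.filter (fun u => ¬ 0 < q u), q u = 0 :=
        Finset.sum_eq_zero fun u hu => by
          simp at hu
          exact le_antisymm hu (hq0 u)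
      rw [hzero, add_zero, Finset.sum_congr rfl hqc, Finset.sum_const, nsmul_eq_mul]
    have hcard : (T.card : ℝ) * c = 1 := by rw [← hsum1, hq1]
    have hZ : ∑ t, q t ^ γ = T.card * c ^ γ := by
      rw [← Finset.sum_filter_add_sum_filter_not Finset.univ (fun u => 0 < q u) (fun t => q t ^ γ)]
      have hzero : ∑ u ∈ Finset.univ.filter (fun u => ¬ 0 < q u), q u ^ γ = 0 :=
        Finset.sum_eq_zero fun u hu => by
          simp at hu
          have : q u = 0 := le_antisymm hu (hq0 u)
          rw [this, Real.zero_rpow hγ.ne']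
      rw [hzero, add_zero]
      rw [Finset.sum_congr rfl (fun u hu => by rw [hqc u hu]), Finset.sum_const, nsmul_eq_mul]
    by_cases hqs : 0 < q s
    · have hsT : s ∈ T := by simp [hT, hqs]
      have hqsc : q s = c := hqc s hsT
      rw [hqsc, hZ]
      have hcγ : 0 < c ^ γ := Real.rpow_pos_of_pos hcpos γ
      have hcardpos : (0 : ℝ) < T.card := by
        exact_mod_cast Finset.card_pos.mpr hTne
      field_simp
      nlinarith [hcard]
    · have : q s = 0 := le_antisymm (not_lt.mp hqs) (hq0 s)
      rw [this, Real.zero_rpow hγ.ne', zero_div]
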